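/- Let g be a finite-dimensional solvable Lie algebra over ℝ, let n ⊆ g be an ideal which is nilpotent as a Lie algebra and which contains every nilpotent ideal of g (the nilradical), and let V ⊆ g be a linear subspace with g = V ⊕ n as vector spaces. For each A ∈ V let ad(A) = S_A + N_A be the Jordan–Chevalley decomposition of the adjoint endomorphism (S_A semisimple, N_A nilpotent, S_A ∘ N_A = N_A ∘ S_A), and assume S_A(B) = 0 for all A, B ∈ V. Define D : g → End(g) by D(A+X) = S_A for A ∈ V, X ∈ n, and assume moreover that D is linear and that D(X) ∘ D(Y) = D(Y) ∘ D(X) for all X, Y ∈ g. If ⁅X,Y⁆ = D(X)(Y) − D(Y)(X) for all X, Y ∈ g (i.e. the unipotent-hull bracket vanishes identically on g), then there exist an abelian Lie subalgebra a ⊆ g and an abelian Lie ideal m ⊆ g with g = a ⊕ m as vector spaces such that for every A ∈ a the endomorphism ad(A) of g is semisimple. -/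

import Mathlib

/-- Let `g` be a finite-dimensional solvable real Lie algebra with nilradical `n`
(a nilpotent ideal containing every nilpotent ideal), and `V` a linear complement of `n`.
Suppose for every `A ∈ V` the adjoint endomorphism decomposes as `ad A = S A + N A`
(Jordan–Chevalley: `S A` semisimple, `N A` nilpotent, commuting), with `S A B = 0` for all
`A, B ∈ V`.  Let `D` be linear with `D (A + X) = S A` for `A ∈ V`, `X ∈ n`, and with
pairwise commuting values.  If the unipotent-hull bracket vanishes identically, i.e.
`⁅X, Y⁆ = D X Y - D Y X` for all `X, Y`, then `g` splits as a vector-space direct sum of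
an abelian subalgebra `a` and an abelian ideal `m` such that `ad A` is semisimple for
every `A ∈ a`. -/
theorem abelian_unipotent_hull_implies_semisimple_splitting
    {g : Type*} [LieRing g] [LieAlgebra ℝ g] [FiniteDimensional ℝ g]
    [LieAlgebra.IsSolvable g]
    (n : LieIdeal ℝ g) (hnilp : LieModule.IsNilpotent ↥n ↥n)
    (hmax : ∀ I : LieIdeal ℝ g, LieModule.IsNilpotent ↥I ↥I → I ≤ n)
    (V : Submodule ℝ g) (hcompl : IsCompl V (n : Submodule ℝ g))
    (S N : V → Module.End ℝ g)
    (hJordan : ∀ A : V, LieAlgebra.ad ℝ g (A : g) = S A + N A)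
    (hS : ∀ A : V, (S A).IsSemisimple)
    (hN : ∀ A : V, IsNilpotent (N A))
    (hSN : ∀ A : V, Commute (S A) (N A))
    (hSV : ∀ A B : V, S A (B : g) = 0)
    (D : g →ₗ[ℝ] Module.End ℝ g)
    (hD : ∀ (A : V) (X : g), X ∈ n → D ((A : g) + X) = S A)
    (hDcomm : ∀ X Y : g, Commute (D X) (D Y))
    (hflat : ∀ X Y : g, ⁅X, Y⁆ = D X Y - D Y X) :
    ∃ (a : LieSubalgebra ℝ g) (m : LieIdeal ℝ g),
      IsLieAbelian ↥a ∧ IsLieAbelian ↥m ∧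
      IsCompl a.toSubmodule (m : Submodule ℝ g) ∧
      ∀ A ∈ a, (LieAlgebra.ad ℝ g A).IsSemisimple := by

  -- `S 0 = 0` and hence `D` vanishes on `n`.
  have hS0 : S 0 = 0 := by
    have h := hD 0 0 n.zero_mem
    have h0 : D ((0:g) + 0) = 0 := by simp
    rw [show ((0:V):g) = 0 from rfl] at h
    rw [h] at h0
    exact h0
  have hDn : ∀ X ∈ n, D X = 0 := by
    intro X hX
    have h := hD 0 X hX
    rw [show ((0:V):g) = 0 from rfl, zero_add, hS0] at h
    exact h
  have hDV : ∀ A : V, D (A : g) = S A := by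
    intro A
    have h := hD A 0 n.zero_mem
    rwa [add_zero] at h
  -- bracket of two elements of `V` vanishes
  have hVbr : ∀ A B : V, ⁅(A:g), (B:g)⁆ = 0 := by
    intro A B
    rw [hflat, hDV, hDV, hSV, hSV, sub_zero]
  -- `ad A = S A` for `A ∈ V`
  have hadS : ∀ A : V, LieAlgebra.ad ℝ g (A : g) = S A := by
    intro A
    ext Y
    have hmem : Y ∈ V ⊔ (n : Submodule ℝ g) := by
      rw [hcompl.sup_eq_top]; trivial
    obtain ⟨b, hb, x, hx, rfl⟩ := Submodule.mem_sup.mp hmem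
    have hDbx : D (b + x) = S ⟨b, hb⟩ := hD ⟨b, hb⟩ x hx
    have : ⁅(A:g), b + x⁆ = S A (b + x) := by
      rw [hflat, hDV, hDbx, hSV, sub_zero]
    simpa [LieAlgebra.ad_apply] using this
  refine ⟨{ V with lie_mem' := ?_ }, n, ?_, ?_, ?_, ?_⟩
  · intro x y hx hy
    have := hVbr ⟨x, hx⟩ ⟨y, hy⟩
    simp only at this
    rw [this]
    exact V.zero_mem
  · constructor
    intro x y
    apply Subtype.ext
    have := hVbr ⟨(x:g), x.2⟩ ⟨(y:g), y.2⟩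
    simpa using this
  · constructor
    intro x y
    apply Subtype.ext
    have h1 : D (x : g) = 0 := hDn _ x.2
    have h2 : D (y : g) = 0 := hDn _ y.2
    have : ⁅(x:g), (y:g)⁆ = 0 := by rw [hflat, h1, h2]; simp
    simpa using this
  · exact hcompl
  · intro A hA
    have : LieAlgebra.ad ℝ g A = S ⟨A, hA⟩ := hadS ⟨A, hA⟩
    rw [this]
    exact hS _
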